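/- Stability of the full scheme: with u⁰ := P_h ũ⁰ where ũ⁰ is obtained by cell-averaging an initial datum v⁰ ∈ L²(Ω)³, and f^{m+1} obtained by space–time cell-averaging f ∈ L²([0,T];L²(Ω)³), the discrete solution satisfies ‖u^{n+1}‖_{Ω_h} ≤ ‖v⁰‖_{L²(Ω)³} + √T ‖f‖_{L²([0,T];L²(Ω)³)} for all 0 ≤ n < T_τ, uniformly in h and τ. -/

import Mathlib

open Finset MeasureTheory Set Filter

/-- Standard basis vector `e^i` of the integer grid `ℤ³` (grid points `x` represent `h•x ∈ hℤ³`). -/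
def gE (i : Fin 3) : Fin 3 → ℤ := fun j => if j = i then 1 else 0

/-- Forward difference quotient `D_i⁺φ(x) = (φ(x+he^i) − φ(x))/h`. -/
noncomputable def Dp (h : ℝ) (i : Fin 3) (φ : (Fin 3 → ℤ) → ℝ) (x : Fin 3 → ℤ) : ℝ :=
  (φ (x + gE i) - φ x) / h

/-- Centered second difference `D_i²φ(x) = (φ(x+he^i)+φ(x−he^i)−2φ(x))/h²`. -/
noncomputable def Dtwo (h : ℝ) (i : Fin 3) (φ : (Fin 3 → ℤ) → ℝ) (x : Fin 3 → ℤ) : ℝ :=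
  (φ (x + gE i) + φ (x - gE i) - 2 * φ x) / h ^ 2

/-- Discrete (forward) gradient `𝒟φ`. -/
noncomputable def dgrad (h : ℝ) (φ : (Fin 3 → ℤ) → ℝ) (x : Fin 3 → ℤ) : Fin 3 → ℝ :=
  fun i => Dp h i φ x

/-- Discrete (backward) divergence `𝒟·w`. -/
noncomputable def ddiv (h : ℝ) (w : (Fin 3 → ℤ) → Fin 3 → ℝ) (x : Fin 3 → ℤ) : ℝ :=
  ∑ i, (w x i - w (x - gE i) i) / h

/-- Grid boundary `∂Ω_h = {x ∈ Ω_h | {x ± he^i} ⊄ Ω_h}`. -/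
def gBdry (Ω : Finset (Fin 3 → ℤ)) : Finset (Fin 3 → ℤ) :=
  Ω.filter fun x => ¬ (∀ i, (x + gE i) ∈ Ω ∧ (x - gE i) ∈ Ω)

/-- The half-open cube `C_h(x)` of side `h` centered at the point `h•x` of `hℤ³`. -/
def Cube (h : ℝ) (x : Fin 3 → ℤ) : Set (Fin 3 → ℝ) :=
  {y | ∀ i, h * (x i : ℝ) - h / 2 ≤ y i ∧ y i < h * (x i : ℝ) + h / 2}


abbrev Grid := Fin 3 → ℤ

lemma gsum_translate (B : Finset Grid) (c : Grid) (F : Grid → ℝ)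
    (h1 : ∀ x, F x ≠ 0 → x ∈ B) (h2 : ∀ x, F (x + c) ≠ 0 → x ∈ B) :
    ∑ x ∈ B, F (x + c) = ∑ x ∈ B, F x := by
  classical
  have hinj : ∀ a ∈ B, ∀ b ∈ B, a + c = b + c → a = b := fun a _ b _ hab => by
    simpa using congrArg (fun z => z - c) hab
  have step1 : ∑ x ∈ B, F (x + c) = ∑ y ∈ B.image (· + c), F y :=
    (Finset.sum_image (g := (· + c)) (f := F) hinj).symm
  rw [step1]
  have key : ∀ y ∈ B ∪ B.image (· + c), F y ≠ 0 → y ∈ B.image (· + c) := by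
    intro y _ hy
    have : y - c + c = y := by abel
    exact Finset.mem_image.2 ⟨y - c, h2 _ (by rwa [this]), this⟩
  rw [Finset.sum_subset (Finset.subset_union_right) (fun y hy hyn => by
      by_contra hne; exact hyn (key y hy hne)),
    ← Finset.sum_subset (Finset.subset_union_left) (fun y hy hyn => by
      by_contra hne; exact hyn (h1 y hne))]

def gnbr (S : Finset Grid) : Finset Grid :=
  S ∪ Finset.univ.biUnion fun j : Fin 3 => S.image (· + gE j) ∪ S.image (· - gE j)

lemma subset_nbr (S : Finset Grid) : S ⊆ gnbr S := Finset.subset_union_left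

lemma add_mem_nbr {S : Finset Grid} {x : Grid} (hx : x ∈ S) (j : Fin 3) : x + gE j ∈ gnbr S := by
  refine Finset.mem_union_right _ (Finset.mem_biUnion.2 ⟨j, Finset.mem_univ _, ?_⟩)
  exact Finset.mem_union_left _ (Finset.mem_image.2 ⟨x, hx, rfl⟩)

lemma sub_mem_nbr {S : Finset Grid} {x : Grid} (hx : x ∈ S) (j : Fin 3) : x - gE j ∈ gnbr S := by
  refine Finset.mem_union_right _ (Finset.mem_biUnion.2 ⟨j, Finset.mem_univ _, ?_⟩)
  exact Finset.mem_union_right _ (Finset.mem_image.2 ⟨x, hx, rfl⟩)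

lemma gas (x c : Grid) : x + c - c = x := by abel
lemma gsa (x c : Grid) : x - c + c = x := by abel

lemma intB {Ωh : Finset Grid} {x : Grid} (hx : x ∈ Ωh \ gBdry Ωh) : x ∈ gnbr (gnbr Ωh) :=
  subset_nbr _ (subset_nbr _ (Finset.mem_sdiff.1 hx).1)

lemma addB {Ωh : Finset Grid} {x : Grid} (j : Fin 3) (hx : x + gE j ∈ Ωh) :
    x ∈ gnbr (gnbr Ωh) := by
  have : x = x + gE j - gE j := (gas x (gE j)).symm
  rw [this]; exact sub_mem_nbr (subset_nbr _ hx) j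


lemma gdiv_helper (h a b c d e : ℝ) (hh : h ≠ 0) :
    a * ((b * (c / h) + d * (e / h)) / 2) = a * (b * c + d * e) / (2 * h) := by
  rw [eq_div_iff (mul_ne_zero two_ne_zero hh)]
  field_simp

/-- Skew-symmetry: the convection term is orthogonal to `w`. -/
lemma conv_zero (h : ℝ) (hh : h ≠ 0) (Ωh : Finset Grid) (u' w : Grid → Fin 3 → ℝ)
    (hdiv : ∀ x ∈ Ωh \ gBdry Ωh, ddiv h u' x = 0)
    (hw : ∀ x, x ∉ Ωh \ gBdry Ωh → w x = 0) :
    ∑ x ∈ gnbr (gnbr Ωh), ∑ i, w x i *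
      (∑ j, (u' (x - gE j) j * Dp h j (fun y => w y i) (x - gE j)
        + u' x j * Dp h j (fun y => w y i) x) / 2) = 0 := by
  classical
  set B := gnbr (gnbr Ωh) with hB
  have key : ∀ i j : Fin 3,
      ∑ x ∈ B, w x i * (u' (x - gE j) j * (w x i - w (x - gE j) i)
        + u' x j * (w (x + gE j) i - w x i))
      = ∑ x ∈ B, (w x i) ^ 2 * (u' (x - gE j) j - u' x j) := by
    intro i j
    have t1 : ∑ x ∈ B, w x i * (u' (x - gE j) j * (w x i - w (x - gE j) i))
        = ∑ x ∈ B, w (x + gE j) i * (u' x j * (w (x + gE j) i - w x i)) := by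
      have := (gsum_translate B (gE j)
          (fun x => w x i * (u' (x - gE j) j * (w x i - w (x - gE j) i)))
          (fun x hx0 => by
            have hwx : w x ≠ 0 := fun e => hx0 (by simp [e])
            have : x ∈ Ωh \ gBdry Ωh := by by_contra hc; exact hwx (hw x hc)
            exact intB this)
          (fun x hx0 => by
            have hwx : w (x + gE j) ≠ 0 := fun e => hx0 (by simp [e])
            have : x + gE j ∈ Ωh \ gBdry Ωh := by by_contra hc; exact hwx (hw _ hc)
            exact addB j (Finset.mem_sdiff.1 this).1)).symm
      simpa only [gas] using this
    have t2 : ∑ x ∈ B, u' x j * (w (x + gE j) i) ^ 2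
        = ∑ x ∈ B, u' (x - gE j) j * (w x i) ^ 2 := by
      have := gsum_translate B (gE j) (fun x => u' (x - gE j) j * (w x i) ^ 2)
          (fun x hx0 => by
            have hwx : w x ≠ 0 := fun e => hx0 (by simp [e])
            have : x ∈ Ωh \ gBdry Ωh := by by_contra hc; exact hwx (hw x hc)
            exact intB this)
          (fun x hx0 => by
            have hwx : w (x + gE j) ≠ 0 := fun e => hx0 (by simp [e, gas])
            have : x + gE j ∈ Ωh \ gBdry Ωh := by by_contra hc; exact hwx (hw _ hc)
            exact addB j (Finset.mem_sdiff.1 this).1)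
      simp only [gas] at this
      exact this
    calc ∑ x ∈ B, w x i * (u' (x - gE j) j * (w x i - w (x - gE j) i)
            + u' x j * (w (x + gE j) i - w x i))
        = ∑ x ∈ B, (w x i * (u' (x - gE j) j * (w x i - w (x - gE j) i))
            + w x i * (u' x j * (w (x + gE j) i - w x i))) :=
          Finset.sum_congr rfl fun x _ => by ring
      _ = ∑ x ∈ B, w x i * (u' (x - gE j) j * (w x i - w (x - gE j) i))
            + ∑ x ∈ B, w x i * (u' x j * (w (x + gE j) i - w x i)) :=
          Finset.sum_add_distrib
      _ = ∑ x ∈ B, w (x + gE j) i * (u' x j * (w (x + gE j) i - w x i))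
            + ∑ x ∈ B, w x i * (u' x j * (w (x + gE j) i - w x i)) := by rw [t1]
      _ = ∑ x ∈ B, (u' x j * (w (x + gE j) i) ^ 2 - u' x j * (w x i) ^ 2) := by
          rw [← Finset.sum_add_distrib]
          exact Finset.sum_congr rfl fun x _ => by ring
      _ = ∑ x ∈ B, u' x j * (w (x + gE j) i) ^ 2 - ∑ x ∈ B, u' x j * (w x i) ^ 2 :=
          Finset.sum_sub_distrib _ _
      _ = ∑ x ∈ B, u' (x - gE j) j * (w x i) ^ 2 - ∑ x ∈ B, u' x j * (w x i) ^ 2 := by rw [t2]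
      _ = ∑ x ∈ B, (w x i) ^ 2 * (u' (x - gE j) j - u' x j) := by
          rw [← Finset.sum_sub_distrib]
          exact Finset.sum_congr rfl fun x _ => by ring
  have expand : ∀ x : Grid, ∑ i, w x i *
      (∑ j, (u' (x - gE j) j * Dp h j (fun y => w y i) (x - gE j)
        + u' x j * Dp h j (fun y => w y i) x) / 2)
      = ∑ i, ∑ j, w x i * (u' (x - gE j) j * (w x i - w (x - gE j) i)
          + u' x j * (w (x + gE j) i - w x i)) / (2 * h) := by
    intro x
    refine Finset.sum_congr rfl fun i _ => ?_
    rw [Finset.mul_sum]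
    refine Finset.sum_congr rfl fun j _ => ?_
    simp only [Dp, gsa]
    exact gdiv_helper h _ _ _ _ _ hh
  calc ∑ x ∈ B, ∑ i, w x i *
        (∑ j, (u' (x - gE j) j * Dp h j (fun y => w y i) (x - gE j)
          + u' x j * Dp h j (fun y => w y i) x) / 2)
      = ∑ x ∈ B, ∑ i, ∑ j, w x i * (u' (x - gE j) j * (w x i - w (x - gE j) i)
          + u' x j * (w (x + gE j) i - w x i)) / (2 * h) :=
        Finset.sum_congr rfl fun x _ => expand x
    _ = ∑ i : Fin 3, ∑ j : Fin 3, (∑ x ∈ B, w x i * (u' (x - gE j) j * (w x i - w (x - gE j) i)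
          + u' x j * (w (x + gE j) i - w x i))) / (2 * h) := by
        rw [Finset.sum_comm]
        refine Finset.sum_congr rfl fun i _ => ?_
        rw [Finset.sum_comm]
        exact Finset.sum_congr rfl fun j _ => (Finset.sum_div _ _ _).symm
    _ = ∑ i : Fin 3, ∑ j : Fin 3, (∑ x ∈ B, (w x i) ^ 2 * (u' (x - gE j) j - u' x j)) / (2 * h) := by
        exact Finset.sum_congr rfl fun i _ => Finset.sum_congr rfl fun j _ => by rw [key i j]
    _ = (∑ i : Fin 3, ∑ j : Fin 3, ∑ x ∈ B, (w x i) ^ 2 * (u' (x - gE j) j - u' x j)) / (2 * h) := by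
        simp_rw [← Finset.sum_div]
    _ = (∑ x ∈ B, (∑ i, (w x i) ^ 2) * (∑ j, (u' (x - gE j) j - u' x j))) / (2 * h) := by
        congr 1
        calc ∑ i : Fin 3, ∑ j : Fin 3, ∑ x ∈ B, (w x i) ^ 2 * (u' (x - gE j) j - u' x j)
            = ∑ i : Fin 3, ∑ x ∈ B, ∑ j : Fin 3, (w x i) ^ 2 * (u' (x - gE j) j - u' x j) :=
              Finset.sum_congr rfl fun i _ => Finset.sum_comm
          _ = ∑ x ∈ B, ∑ i : Fin 3, ∑ j : Fin 3, (w x i) ^ 2 * (u' (x - gE j) j - u' x j) :=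
              Finset.sum_comm
          _ = ∑ x ∈ B, (∑ i, (w x i) ^ 2) * (∑ j, (u' (x - gE j) j - u' x j)) :=
              Finset.sum_congr rfl fun x _ => (Finset.sum_mul_sum _ _ _ _).symm
    _ = 0 := by
        rw [div_eq_zero_iff]
        left
        refine Finset.sum_eq_zero fun x _ => ?_
        by_cases hx : x ∈ Ωh \ gBdry Ωh
        · have hd := hdiv x hx
          have : ∑ j, (u' x j - u' (x - gE j) j) = 0 := by
            have : (∑ j, (u' x j - u' (x - gE j) j)) / h = 0 := by
              simp only [ddiv] at hd
              rwa [← Finset.sum_div] at hd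
            exact (div_eq_zero_iff.1 this).resolve_right hh
          have : ∑ j, (u' (x - gE j) j - u' x j) = 0 := by
            have h2 := this
            have : ∑ j, (u' (x - gE j) j - u' x j) = -∑ j, (u' x j - u' (x - gE j) j) := by
              rw [← Finset.sum_neg_distrib]
              exact Finset.sum_congr rfl fun j _ => by ring
            rw [this, h2, neg_zero]
          rw [this, mul_zero]
        · have := hw x hx
          have : ∑ i, (w x i) ^ 2 = 0 := Finset.sum_eq_zero fun i _ => by simp [this]
          rw [this, zero_mul]

/-- The diffusion term is dissipative. -/
lemma diff_nonpos (h : ℝ) (Ωh : Finset Grid) (w : Grid → Fin 3 → ℝ)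
    (hw : ∀ x, x ∉ Ωh \ gBdry Ωh → w x = 0) :
    ∑ x ∈ gnbr (gnbr Ωh), ∑ i, w x i * (∑ j, Dtwo h j (fun y => w y i) x) ≤ 0 := by
  classical
  set B := gnbr (gnbr Ωh) with hB
  have key : ∀ i j : Fin 3,
      ∑ x ∈ B, w x i * (w (x + gE j) i + w (x - gE j) i - 2 * w x i)
      = -∑ x ∈ B, (w (x + gE j) i - w x i) ^ 2 := by
    intro i j
    have t3 : ∑ x ∈ B, w x i * w (x - gE j) i = ∑ x ∈ B, w (x + gE j) i * w x i := by
      have := (gsum_translate B (gE j) (fun x => w x i * w (x - gE j) i)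
          (fun x hx0 => by
            have hwx : w x ≠ 0 := fun e => hx0 (by simp [e])
            have : x ∈ Ωh \ gBdry Ωh := by by_contra hc; exact hwx (hw x hc)
            exact intB this)
          (fun x hx0 => by
            have hwx : w (x + gE j) ≠ 0 := fun e => hx0 (by simp [e])
            have : x + gE j ∈ Ωh \ gBdry Ωh := by by_contra hc; exact hwx (hw _ hc)
            exact addB j (Finset.mem_sdiff.1 this).1)).symm
      simpa only [gas] using this
    have t4 : ∑ x ∈ B, (w (x + gE j) i) ^ 2 = ∑ x ∈ B, (w x i) ^ 2 := by
      have := gsum_translate B (gE j) (fun x => (w x i) ^ 2)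
          (fun x hx0 => by
            have hwx : w x ≠ 0 := fun e => hx0 (by simp [e])
            have : x ∈ Ωh \ gBdry Ωh := by by_contra hc; exact hwx (hw x hc)
            exact intB this)
          (fun x hx0 => by
            have hwx : w (x + gE j) ≠ 0 := fun e => hx0 (by simp [e])
            have : x + gE j ∈ Ωh \ gBdry Ωh := by by_contra hc; exact hwx (hw _ hc)
            exact addB j (Finset.mem_sdiff.1 this).1)
      exact this
    have e1 : ∑ x ∈ B, w x i * (w (x + gE j) i + w (x - gE j) i - 2 * w x i)
        = ∑ x ∈ B, w x i * w (x + gE j) i + ∑ x ∈ B, w x i * w (x - gE j) i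
          - 2 * ∑ x ∈ B, (w x i) ^ 2 := by
      rw [Finset.mul_sum, ← Finset.sum_add_distrib, ← Finset.sum_sub_distrib]
      exact Finset.sum_congr rfl fun x _ => by ring
    have e2 : -∑ x ∈ B, (w (x + gE j) i - w x i) ^ 2
        = -(∑ x ∈ B, (w (x + gE j) i) ^ 2 - 2 * ∑ x ∈ B, w (x + gE j) i * w x i
            + ∑ x ∈ B, (w x i) ^ 2) := by
      congr 1
      rw [Finset.mul_sum, ← Finset.sum_sub_distrib, ← Finset.sum_add_distrib]
      exact Finset.sum_congr rfl fun x _ => by ring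
    rw [e1, e2]
    have c1 : ∑ x ∈ B, w x i * w (x + gE j) i = ∑ x ∈ B, w (x + gE j) i * w x i :=
      Finset.sum_congr rfl fun x _ => mul_comm _ _
    linarith [t3, t4, c1]
  have expand : ∀ x : Grid, ∑ i, w x i * (∑ j, Dtwo h j (fun y => w y i) x)
      = ∑ i, ∑ j, w x i * (w (x + gE j) i + w (x - gE j) i - 2 * w x i) / h ^ 2 := by
    intro x
    refine Finset.sum_congr rfl fun i _ => ?_
    rw [Finset.mul_sum]
    refine Finset.sum_congr rfl fun j _ => ?_
    simp only [Dtwo]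
    rw [mul_div_assoc]
  calc ∑ x ∈ B, ∑ i, w x i * (∑ j, Dtwo h j (fun y => w y i) x)
      = ∑ x ∈ B, ∑ i, ∑ j, w x i * (w (x + gE j) i + w (x - gE j) i - 2 * w x i) / h ^ 2 :=
        Finset.sum_congr rfl fun x _ => expand x
    _ = ∑ i : Fin 3, ∑ j : Fin 3,
          (∑ x ∈ B, w x i * (w (x + gE j) i + w (x - gE j) i - 2 * w x i)) / h ^ 2 := by
        rw [Finset.sum_comm]
        refine Finset.sum_congr rfl fun i _ => ?_
        rw [Finset.sum_comm]
        exact Finset.sum_congr rfl fun j _ => (Finset.sum_div _ _ _).symm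
    _ ≤ 0 := by
        refine Finset.sum_nonpos fun i _ => Finset.sum_nonpos fun j _ => ?_
        rw [key i j]
        apply div_nonpos_of_nonpos_of_nonneg
        · simp only [neg_nonpos]
          exact Finset.sum_nonneg fun x _ => sq_nonneg _
        · exact sq_nonneg h

/-- Discrete gradients of interior-supported potentials are orthogonal
to discretely divergence-free fields. -/
lemma grad_ortho (h : ℝ) (hh : h ≠ 0) (Ωh : Finset Grid) (u' : Grid → Fin 3 → ℝ) (φ : Grid → ℝ)
    (hu : ∀ x, x ∉ Ωh \ gBdry Ωh → u' x = 0)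
    (hdiv : ∀ x ∈ Ωh \ gBdry Ωh, ddiv h u' x = 0)
    (hφ : ∀ x, x ∉ Ωh \ gBdry Ωh → φ x = 0) :
    ∑ x ∈ gnbr (gnbr Ωh), ∑ i, u' x i * dgrad h φ x i = 0 := by
  classical
  set B := gnbr (gnbr Ωh) with hB
  have t5 : ∀ i : Fin 3, ∑ x ∈ B, u' x i * φ (x + gE i)
      = ∑ x ∈ B, u' (x - gE i) i * φ x := by
    intro i
    have := gsum_translate B (gE i) (fun x => u' (x - gE i) i * φ x)
        (fun x hx0 => by
          have hφx : φ x ≠ 0 := fun e => hx0 (by simp [e])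
          have : x ∈ Ωh \ gBdry Ωh := by by_contra hc; exact hφx (hφ x hc)
          exact intB this)
        (fun x hx0 => by
          have hux : u' x ≠ 0 := by
            intro e; apply hx0; simp only [gas]; rw [e]; simp
          have : x ∈ Ωh \ gBdry Ωh := by by_contra hc; exact hux (hu x hc)
          exact intB this)
    simp only [gas] at this
    exact this
  calc ∑ x ∈ B, ∑ i, u' x i * dgrad h φ x i
      = ∑ x ∈ B, ∑ i, (u' x i * φ (x + gE i) - u' x i * φ x) / h := by
        refine Finset.sum_congr rfl fun x _ => Finset.sum_congr rfl fun i _ => ?_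
        simp only [dgrad, Dp]
        ring
    _ = ∑ i : Fin 3, (∑ x ∈ B, u' x i * φ (x + gE i) - ∑ x ∈ B, u' x i * φ x) / h := by
        rw [Finset.sum_comm]
        refine Finset.sum_congr rfl fun i _ => ?_
        rw [← Finset.sum_div, Finset.sum_sub_distrib]
    _ = ∑ i : Fin 3, (∑ x ∈ B, (u' (x - gE i) i - u' x i) * φ x) / h := by
        refine Finset.sum_congr rfl fun i _ => ?_
        rw [t5 i, ← Finset.sum_sub_distrib]
        congr 1
        exact Finset.sum_congr rfl fun x _ => by ring
    _ = (∑ x ∈ B, (∑ i, (u' (x - gE i) i - u' x i)) * φ x) / h := by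
        rw [← Finset.sum_div]
        congr 1
        rw [Finset.sum_comm]
        exact Finset.sum_congr rfl fun x _ => (Finset.sum_mul _ _ _).symm
    _ = 0 := by
        rw [div_eq_zero_iff]
        left
        refine Finset.sum_eq_zero fun x _ => ?_
        by_cases hx : x ∈ Ωh \ gBdry Ωh
        · have hd := hdiv x hx
          have hz : ∑ i, (u' x i - u' (x - gE i) i) = 0 := by
            have : (∑ i, (u' x i - u' (x - gE i) i)) / h = 0 := by
              simp only [ddiv] at hd
              rwa [← Finset.sum_div] at hd
            exact (div_eq_zero_iff.1 this).resolve_right hh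
          have : ∑ i, (u' (x - gE i) i - u' x i) = 0 := by
            have e : ∑ i, (u' (x - gE i) i - u' x i)
                = -∑ i, (u' x i - u' (x - gE i) i) := by
              rw [← Finset.sum_neg_distrib]
              exact Finset.sum_congr rfl fun i _ => by ring
            rw [e, hz, neg_zero]
          rw [this, zero_mul]
        · rw [hφ x hx, mul_zero]

/-- Norm contraction under the discrete Leray projection. -/
lemma proj_le (h : ℝ) (hh : h ≠ 0) (Ωh : Finset Grid) (u' w : Grid → Fin 3 → ℝ)
    (φ : Grid → ℝ)
    (hu : ∀ x, x ∉ Ωh \ gBdry Ωh → u' x = 0)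
    (hdiv : ∀ x ∈ Ωh \ gBdry Ωh, ddiv h u' x = 0)
    (hφ : ∀ x, x ∉ Ωh \ gBdry Ωh → φ x = 0)
    (hw : ∀ x ∈ Ωh \ gBdry Ωh, u' x + dgrad h φ x = w x) :
    ∑ x ∈ Ωh, ∑ i, (u' x i) ^ 2 ≤ ∑ x ∈ Ωh, ∑ i, (w x i) ^ 2 := by
  classical
  set I := Ωh \ gBdry Ωh with hI
  have hIsub : I ⊆ Ωh := Finset.sdiff_subset
  have hIB : I ⊆ gnbr (gnbr Ωh) := fun x hx => intB hx
  have e1 : ∑ x ∈ Ωh, ∑ i, (u' x i) ^ 2 = ∑ x ∈ I, ∑ i, (u' x i) ^ 2 :=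
    (Finset.sum_subset hIsub fun x _ hxn => by simp [hu x hxn]).symm
  have ortho := grad_ortho h hh Ωh u' φ hu hdiv hφ
  have orthoI : ∑ x ∈ I, ∑ i, u' x i * dgrad h φ x i = 0 := by
    rw [Finset.sum_subset hIB fun x _ hxn => by simp [hu x hxn]]
    exact ortho
  have e2 : ∑ x ∈ I, ∑ i, (w x i) ^ 2
      = ∑ x ∈ I, ∑ i, (u' x i) ^ 2 + 2 * ∑ x ∈ I, ∑ i, u' x i * dgrad h φ x i
        + ∑ x ∈ I, ∑ i, (dgrad h φ x i) ^ 2 := by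
    rw [Finset.mul_sum, ← Finset.sum_add_distrib, ← Finset.sum_add_distrib]
    refine Finset.sum_congr rfl fun x hx => ?_
    rw [Finset.mul_sum, ← Finset.sum_add_distrib, ← Finset.sum_add_distrib]
    refine Finset.sum_congr rfl fun i _ => ?_
    have := hw x hx
    have hwi : w x i = u' x i + dgrad h φ x i := by
      rw [← this]; simp
    rw [hwi]; ring
  have e3 : ∑ x ∈ I, ∑ i, (u' x i) ^ 2 ≤ ∑ x ∈ I, ∑ i, (w x i) ^ 2 := by
    rw [e2, orthoI]
    have : (0:ℝ) ≤ ∑ x ∈ I, ∑ i, (dgrad h φ x i) ^ 2 :=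
      Finset.sum_nonneg fun x _ => Finset.sum_nonneg fun i _ => sq_nonneg _
    linarith
  have e4 : ∑ x ∈ I, ∑ i, (w x i) ^ 2 ≤ ∑ x ∈ Ωh, ∑ i, (w x i) ^ 2 :=
    Finset.sum_le_sum_of_subset_of_nonneg hIsub fun x _ _ =>
      Finset.sum_nonneg fun i _ => sq_nonneg _
  rw [e1]
  exact e3.trans e4

/-- Cauchy–Schwarz for set integrals: `(∫_s g)² ≤ μ(s) ∫_s g²`. -/
lemma sq_setIntegral_le {α : Type*} [MeasurableSpace α] (μ : Measure α) (s : Set α)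
    (hs : μ s ≠ ⊤) (g : α → ℝ) (hg : IntegrableOn g s μ)
    (hg2 : IntegrableOn (fun x => g x ^ 2) s μ) :
    (∫ x in s, g x ∂μ) ^ 2 ≤ (μ s).toReal * ∫ x in s, g x ^ 2 ∂μ := by
  obtain ⟨a, ha⟩ : ∃ a, a = (μ s).toReal := ⟨_, rfl⟩
  obtain ⟨b, hb⟩ : ∃ b, b = ∫ x in s, g x ∂μ := ⟨_, rfl⟩
  have ha0 : 0 ≤ a := ha ▸ ENNReal.toReal_nonneg
  have hconst : IntegrableOn (fun _ : α => b ^ 2) s μ := integrableOn_const hs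
  have h1 : IntegrableOn (fun x => a ^ 2 * g x ^ 2) s μ := hg2.const_mul _
  have h2 : IntegrableOn (fun x => 2 * a * b * g x) s μ := hg.const_mul _
  have key : 0 ≤ ∫ x in s, (a * g x - b) ^ 2 ∂μ :=
    integral_nonneg fun x => sq_nonneg _
  have expand : ∫ x in s, (a * g x - b) ^ 2 ∂μ
      = a ^ 2 * (∫ x in s, g x ^ 2 ∂μ) - 2 * a * b * b + b ^ 2 * a := by
    have e : (fun x => (a * g x - b) ^ 2)
        = fun x => (a ^ 2 * g x ^ 2 - 2 * a * b * g x) + b ^ 2 := by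
      funext x; ring
    have h12 : IntegrableOn (fun x => a ^ 2 * g x ^ 2 - 2 * a * b * g x) s μ := h1.sub h2
    rw [e, integral_add h12 hconst, integral_sub h1 h2, integral_const_mul,
      integral_const_mul, setIntegral_const, smul_eq_mul, ← hb, measureReal_def, ← ha]
    ring
  rw [expand] at key
  rw [← ha, ← hb]
  rcases eq_or_lt_of_le ha0 with hA | hA
  · have hμ : μ s = 0 := by
      have h0 : (μ s).toReal = 0 := by rw [← ha, ← hA]
      exact ((ENNReal.toReal_eq_zero_iff _).1 h0).resolve_right hs
    have hb0 : b = 0 := by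
      rw [hb, Measure.restrict_eq_zero.2 hμ, integral_zero_measure]
    rw [hb0, ← hA]
    simp
  · nlinarith [key, hA]

lemma cube_eq (h : ℝ) (x : Grid) :
    Cube h x = Set.pi Set.univ fun i => Set.Ico (h * (x i : ℝ) - h / 2) (h * (x i : ℝ) + h / 2) := by
  ext y; simp [Cube, Set.mem_pi, Set.mem_Ico]

lemma measurableSet_cube (h : ℝ) (x : Grid) : MeasurableSet (Cube h x) := by
  rw [cube_eq]
  exact MeasurableSet.univ_pi fun i => measurableSet_Ico

lemma volume_cube (h : ℝ) (hh : 0 < h) (x : Grid) :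
    volume (Cube h x) = ENNReal.ofReal h ^ 3 := by
  rw [cube_eq, volume_pi_pi]
  have : ∀ i : Fin 3, volume (Set.Ico (h * (x i : ℝ) - h / 2) (h * (x i : ℝ) + h / 2))
      = ENNReal.ofReal h := by
    intro i
    rw [Real.volume_Ico]
    congr 1
    ring
  simp [this]

lemma volume_cube_toReal (h : ℝ) (hh : 0 < h) (x : Grid) :
    (volume (Cube h x)).toReal = h ^ 3 := by
  rw [volume_cube h hh x]
  rw [← ENNReal.ofReal_pow hh.le, ENNReal.toReal_ofReal (by positivity)]

lemma cube_disjoint (h : ℝ) (hh : 0 < h) {x y : Grid} (hxy : x ≠ y) :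
    Disjoint (Cube h x) (Cube h y) := by
  rw [Set.disjoint_left]
  intro z hzx hzy
  apply hxy
  funext i
  have h1 := hzx i
  have h2 := hzy i
  have hx1 : h * (x i : ℝ) < h * (y i : ℝ) + h := by linarith [h1.1, h1.2, h2.1, h2.2]
  have hx2 : h * (y i : ℝ) < h * (x i : ℝ) + h := by linarith [h1.1, h1.2, h2.1, h2.2]
  have l1 : (x i : ℝ) < (y i : ℝ) + 1 := by nlinarith
  have l2 : (y i : ℝ) < (x i : ℝ) + 1 := by nlinarith
  have i1 : x i < y i + 1 := by exact_mod_cast l1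
  have i2 : y i < x i + 1 := by exact_mod_cast l2
  omega

/-- Cauchy–Schwarz for double finite sums with square roots. -/
lemma cs2 (s : Finset Grid) (a b : Grid → Fin 3 → ℝ) :
    ∑ x ∈ s, ∑ i, a x i * b x i ≤
      Real.sqrt (∑ x ∈ s, ∑ i, (a x i) ^ 2) * Real.sqrt (∑ x ∈ s, ∑ i, (b x i) ^ 2) := by
  classical
  have key := Finset.sum_mul_sq_le_sq_mul_sq (s ×ˢ (Finset.univ : Finset (Fin 3)))
    (fun p => a p.1 p.2) (fun p => b p.1 p.2)
  rw [Finset.sum_product, Finset.sum_product, Finset.sum_product] at key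
  have h1 : ∑ x ∈ s, ∑ i, a x i * b x i ≤
      Real.sqrt ((∑ x ∈ s, ∑ i, a x i * b x i) ^ 2) := by
    rw [Real.sqrt_sq_eq_abs]; exact le_abs_self _
  refine h1.trans ?_
  rw [← Real.sqrt_mul (Finset.sum_nonneg fun x _ => Finset.sum_nonneg fun i _ => sq_nonneg _)]
  exact Real.sqrt_le_sqrt key

lemma abs_le_one_add_sq (v : ℝ) : ‖v‖ ≤ 1 + v ^ 2 := by
  rw [Real.norm_eq_abs]
  nlinarith [abs_nonneg v, sq_abs v, sq_nonneg (|v| - 1)]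

/-- Jensen-type bound for the cell-averaged initial datum. -/
lemma avg_bound (h : ℝ) (hh : 0 < h) (Ω : Set (Fin 3 → ℝ)) (Ωh : Finset Grid)
    (hcube : ∀ x ∈ Ωh, Cube h x ⊆ Ω)
    (v0 : (Fin 3 → ℝ) → Fin 3 → ℝ) (hv0m : ∀ i, Measurable fun y => v0 y i)
    (hv0L2 : IntegrableOn (fun y => ∑ i, (v0 y i) ^ 2) Ω)
    (ut0 : Grid → Fin 3 → ℝ)
    (hut0 : ∀ x i, ut0 x i =
      if x ∈ Ωh \ gBdry Ωh then (h ^ 3)⁻¹ * ∫ y in Cube h x, v0 y i else 0) :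
    (∑ x ∈ Ωh, ∑ i, (ut0 x i) ^ 2) * h ^ 3 ≤ ∫ y in Ω, ∑ i, (v0 y i) ^ 2 := by
  classical
  set I := Ωh \ gBdry Ωh with hI
  have hIsub : I ⊆ Ωh := Finset.sdiff_subset
  have hFnn : ∀ y, 0 ≤ ∑ i, (v0 y i) ^ 2 := fun y =>
    Finset.sum_nonneg fun i _ => sq_nonneg _
  have hIcube : ∀ x ∈ Ωh, IntegrableOn (fun y => ∑ i, (v0 y i) ^ 2) (Cube h x) :=
    fun x hx => hv0L2.mono_set (hcube x hx)
  have hvol : ∀ x : Grid, volume (Cube h x) ≠ ⊤ := fun x => by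
    rw [volume_cube h hh x]; exact ENNReal.pow_ne_top ENNReal.ofReal_ne_top
  have hI2 : ∀ (i : Fin 3), ∀ x ∈ Ωh, IntegrableOn (fun y => (v0 y i) ^ 2) (Cube h x) := by
    intro i x hx
    refine Integrable.mono' (hIcube x hx) ((hv0m i).pow_const 2).aestronglyMeasurable
      (ae_of_all _ fun y => ?_)
    rw [Real.norm_eq_abs, abs_of_nonneg (sq_nonneg _)]
    exact Finset.single_le_sum (f := fun i => (v0 y i) ^ 2) (fun i _ => sq_nonneg _)
      (Finset.mem_univ i)
  have hI1 : ∀ (i : Fin 3), ∀ x ∈ Ωh, IntegrableOn (fun y => v0 y i) (Cube h x) := by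
    intro i x hx
    have hcst : IntegrableOn (fun _ : Fin 3 → ℝ => (1:ℝ)) (Cube h x) :=
      integrableOn_const (hvol x)
    refine Integrable.mono' (hcst.add (hI2 i x hx)) (hv0m i).aestronglyMeasurable
      (ae_of_all _ fun y => abs_le_one_add_sq _)
  -- per-cube estimate
  have percube : ∀ x ∈ I, (∑ i, (ut0 x i) ^ 2) * h ^ 3 ≤ ∫ y in Cube h x, ∑ i, (v0 y i) ^ 2 := by
    intro x hx
    have hxΩ : x ∈ Ωh := hIsub hx
    have hsplit : ∫ y in Cube h x, ∑ i, (v0 y i) ^ 2 = ∑ i, ∫ y in Cube h x, (v0 y i) ^ 2 :=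
      integral_finset_sum _ fun i _ => hI2 i x hxΩ
    rw [hsplit, Finset.sum_mul]
    refine Finset.sum_le_sum fun i _ => ?_
    have hcs := sq_setIntegral_le volume (Cube h x) (hvol x) (fun y => v0 y i)
      (hI1 i x hxΩ) (hI2 i x hxΩ)
    rw [volume_cube_toReal h hh x] at hcs
    have hut : ut0 x i = (h ^ 3)⁻¹ * ∫ y in Cube h x, v0 y i := by rw [hut0 x i, if_pos hx]
    rw [hut]
    have h3 : (0:ℝ) < h ^ 3 := by positivity
    rw [mul_pow]
    calc ((h ^ 3)⁻¹) ^ 2 * (∫ y in Cube h x, v0 y i) ^ 2 * h ^ 3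
        ≤ ((h ^ 3)⁻¹) ^ 2 * (h ^ 3 * ∫ y in Cube h x, (v0 y i) ^ 2) * h ^ 3 := by
          have hcs' : (∫ y in Cube h x, v0 y i) ^ 2
              ≤ h ^ 3 * ∫ y in Cube h x, (v0 y i) ^ 2 := hcs
          have hmul := mul_le_mul_of_nonneg_left hcs'
            (by positivity : (0:ℝ) ≤ ((h ^ 3)⁻¹) ^ 2 * h ^ 3)
          nlinarith [hmul]
      _ = ∫ y in Cube h x, (v0 y i) ^ 2 := by field_simp
  -- reduce to interior
  have hred : (∑ x ∈ Ωh, ∑ i, (ut0 x i) ^ 2) * h ^ 3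
      = ∑ x ∈ I, (∑ i, (ut0 x i) ^ 2) * h ^ 3 := by
    rw [Finset.sum_mul]
    exact (Finset.sum_subset hIsub fun x _ hxn => by
      have : ∀ i, ut0 x i = 0 := fun i => by rw [hut0 x i, if_neg hxn]
      simp [this]).symm
  rw [hred]
  have step1 : ∑ x ∈ I, (∑ i, (ut0 x i) ^ 2) * h ^ 3
      ≤ ∑ x ∈ I, ∫ y in Cube h x, ∑ i, (v0 y i) ^ 2 := Finset.sum_le_sum percube
  refine step1.trans ?_
  have hunion : ∑ x ∈ I, ∫ y in Cube h x, ∑ i, (v0 y i) ^ 2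
      = ∫ y in ⋃ x ∈ I, Cube h x, ∑ i, (v0 y i) ^ 2 := by
    refine (integral_biUnion_finset I (fun x _ => measurableSet_cube h x) ?_
      (fun x hx => hIcube x (hIsub hx))).symm
    intro x hx y hy hxy
    exact cube_disjoint h hh hxy
  rw [hunion]
  refine setIntegral_mono_set hv0L2 (ae_of_all _ hFnn) (HasSubset.Subset.eventuallyLE ?_)
  exact Set.iUnion₂_subset fun x hx => hcube x (hIsub hx)

/-- Jensen-type bound for the space–time cell-averaged forcing. -/
lemma force_bound (h τ T : ℝ) (hh : 0 < h) (hτ : 0 < τ) (Tτ : ℕ) (hTT : τ * Tτ ≤ T)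
    (Ω : Set (Fin 3 → ℝ)) (Ωh : Finset Grid) (hcube : ∀ x ∈ Ωh, Cube h x ⊆ Ω)
    (f : ℝ → (Fin 3 → ℝ) → Fin 3 → ℝ)
    (hfm : ∀ i, Measurable fun p : ℝ × (Fin 3 → ℝ) => f p.1 p.2 i)
    (hfL2 : IntegrableOn (fun p : ℝ × (Fin 3 → ℝ) => ∑ i, (f p.1 p.2 i) ^ 2)
      (Set.Icc 0 T ×ˢ Ω))
    (fd : ℕ → Grid → Fin 3 → ℝ)
    (hfd : ∀ (n : ℕ) x i, fd n x i =
      if x ∈ Ωh then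
        (τ * h ^ 3)⁻¹ *
          ∫ t in Set.Ico (τ * (n : ℝ)) (τ * ((n : ℝ) + 1)), ∫ y in Cube h x, f t y i
      else 0)
    (N : ℕ) (hN : N ≤ Tτ) :
    ∑ m ∈ Finset.range N, τ * ((∑ x ∈ Ωh, ∑ i, (fd m x i) ^ 2) * h ^ 3)
      ≤ ∫ t in Set.Icc (0 : ℝ) T, ∫ y in Ω, ∑ i, (f t y i) ^ 2 := by
  classical
  set F : ℝ × (Fin 3 → ℝ) → ℝ := fun p => ∑ i, (f p.1 p.2 i) ^ 2 with hF
  have hFnn : ∀ p, 0 ≤ F p := fun p => Finset.sum_nonneg fun i _ => sq_nonneg _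
  set Q : ℕ → Grid → Set (ℝ × (Fin 3 → ℝ)) :=
    fun m x => Set.Ico (τ * (m : ℝ)) (τ * ((m : ℝ) + 1)) ×ˢ Cube h x with hQ
  have hQsub : ∀ m < N, ∀ x ∈ Ωh, Q m x ⊆ Set.Icc 0 T ×ˢ Ω := by
    intro m hm x hx p hp
    obtain ⟨hp1, hp2⟩ := hp
    refine ⟨⟨?_, ?_⟩, hcube x hx hp2⟩
    · have : (0:ℝ) ≤ τ * m := by positivity
      exact this.trans hp1.1
    · have h1 : τ * ((m : ℝ) + 1) ≤ τ * Tτ := by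
        have : (m : ℝ) + 1 ≤ (Tτ : ℝ) := by exact_mod_cast Nat.succ_le_of_lt (lt_of_lt_of_le hm hN)
        nlinarith
      exact le_of_lt (lt_of_lt_of_le hp1.2 (h1.trans hTT))
  have hQmeas : ∀ m x, MeasurableSet (Q m x) :=
    fun m x => measurableSet_Ico.prod (measurableSet_cube h x)
  have hvolQ : ∀ m x, volume (Q m x) = ENNReal.ofReal τ * ENNReal.ofReal h ^ 3 := by
    intro m x
    rw [hQ]
    rw [Measure.volume_eq_prod, Measure.prod_prod, Real.volume_Ico, volume_cube h hh x]
    congr 2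
    ring
  have hvolQfin : ∀ m x, volume (Q m x) ≠ ⊤ := by
    intro m x; rw [hvolQ m x]
    exact ENNReal.mul_ne_top ENNReal.ofReal_ne_top (ENNReal.pow_ne_top ENNReal.ofReal_ne_top)
  have hvolQtoReal : ∀ m x, (volume (Q m x)).toReal = τ * h ^ 3 := by
    intro m x; rw [hvolQ m x, ENNReal.toReal_mul, ENNReal.toReal_pow,
      ENNReal.toReal_ofReal hτ.le, ENNReal.toReal_ofReal hh.le]
  have hQF : ∀ m < N, ∀ x ∈ Ωh, IntegrableOn F (Q m x) :=
    fun m hm x hx => hfL2.mono_set (hQsub m hm x hx)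
  have hQf2 : ∀ (i : Fin 3), ∀ m < N, ∀ x ∈ Ωh,
      IntegrableOn (fun p : ℝ × (Fin 3 → ℝ) => (f p.1 p.2 i) ^ 2) (Q m x) := by
    intro i m hm x hx
    refine Integrable.mono' (hQF m hm x hx) ((hfm i).pow_const 2).aestronglyMeasurable
      (ae_of_all _ fun p => ?_)
    rw [Real.norm_eq_abs, abs_of_nonneg (sq_nonneg _)]
    exact Finset.single_le_sum (f := fun i => (f p.1 p.2 i) ^ 2) (fun i _ => sq_nonneg _)
      (Finset.mem_univ i)
  have hQf1 : ∀ (i : Fin 3), ∀ m < N, ∀ x ∈ Ωh,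
      IntegrableOn (fun p : ℝ × (Fin 3 → ℝ) => f p.1 p.2 i) (Q m x) := by
    intro i m hm x hx
    have hcst : IntegrableOn (fun _ : ℝ × (Fin 3 → ℝ) => (1:ℝ)) (Q m x) :=
      integrableOn_const (hvolQfin m x)
    exact Integrable.mono' (hcst.add (hQf2 i m hm x hx)) (hfm i).aestronglyMeasurable
      (ae_of_all _ fun p => abs_le_one_add_sq _)
  -- Fubini on each block
  have fub : ∀ (i : Fin 3), ∀ m < N, ∀ x ∈ Ωh,
      ∫ t in Set.Ico (τ * (m : ℝ)) (τ * ((m : ℝ) + 1)), ∫ y in Cube h x, f t y i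
      = ∫ p in Q m x, f p.1 p.2 i := by
    intro i m hm x hx
    rw [hQ]
    have := setIntegral_prod (μ := (volume : Measure ℝ)) (ν := (volume : Measure (Fin 3 → ℝ)))
      (fun p : ℝ × (Fin 3 → ℝ) => f p.1 p.2 i)
      (s := Set.Ico (τ * (m : ℝ)) (τ * ((m : ℝ) + 1))) (t := Cube h x)
      (by rw [← Measure.volume_eq_prod]; exact hQf1 i m hm x hx)
    rw [Measure.volume_eq_prod]
    exact this.symm
  -- per-block estimate
  have perblock : ∀ m < N, ∀ x ∈ Ωh,
      τ * ((∑ i, (fd m x i) ^ 2) * h ^ 3) ≤ ∫ p in Q m x, F p := by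
    intro m hm x hx
    have hsplit : ∫ p in Q m x, F p = ∑ i, ∫ p in Q m x, (f p.1 p.2 i) ^ 2 := by
      rw [hF]
      exact integral_finset_sum _ fun i _ => hQf2 i m hm x hx
    rw [hsplit, Finset.sum_mul, Finset.mul_sum]
    refine Finset.sum_le_sum fun i _ => ?_
    have hcs := sq_setIntegral_le volume (Q m x) (hvolQfin m x)
      (fun p : ℝ × (Fin 3 → ℝ) => f p.1 p.2 i) (hQf1 i m hm x hx) (hQf2 i m hm x hx)
    rw [hvolQtoReal m x] at hcs
    have hcs' : (∫ p in Q m x, f p.1 p.2 i) ^ 2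
        ≤ τ * h ^ 3 * ∫ p in Q m x, (f p.1 p.2 i) ^ 2 := hcs
    have hfdv : fd m x i = (τ * h ^ 3)⁻¹ * ∫ p in Q m x, f p.1 p.2 i := by
      rw [hfd m x i, if_pos hx, fub i m hm x hx]
    rw [hfdv]
    have hth : (0:ℝ) < τ * h ^ 3 := by positivity
    rw [mul_pow]
    have hmul := mul_le_mul_of_nonneg_left hcs'
      (by positivity : (0:ℝ) ≤ τ * (((τ * h ^ 3)⁻¹) ^ 2 * h ^ 3))
    calc τ * (((τ * h ^ 3)⁻¹) ^ 2 * (∫ p in Q m x, f p.1 p.2 i) ^ 2 * h ^ 3)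
        ≤ τ * (((τ * h ^ 3)⁻¹) ^ 2 * (τ * h ^ 3 * ∫ p in Q m x, (f p.1 p.2 i) ^ 2) * h ^ 3) := by
          nlinarith [hmul]
      _ = ∫ p in Q m x, (f p.1 p.2 i) ^ 2 := by field_simp
  -- sum the blocks
  have hsum : ∑ m ∈ Finset.range N, τ * ((∑ x ∈ Ωh, ∑ i, (fd m x i) ^ 2) * h ^ 3)
      = ∑ p ∈ Finset.range N ×ˢ Ωh, τ * ((∑ i, (fd p.1 p.2 i) ^ 2) * h ^ 3) := by
    rw [Finset.sum_product]
    refine Finset.sum_congr rfl fun m _ => ?_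
    rw [Finset.sum_mul, Finset.mul_sum]
  rw [hsum]
  have hstep : ∑ p ∈ Finset.range N ×ˢ Ωh, τ * ((∑ i, (fd p.1 p.2 i) ^ 2) * h ^ 3)
      ≤ ∑ p ∈ Finset.range N ×ˢ Ωh, ∫ q in Q p.1 p.2, F q := by
    refine Finset.sum_le_sum fun p hp => ?_
    obtain ⟨hp1, hp2⟩ := Finset.mem_product.1 hp
    exact perblock p.1 (Finset.mem_range.1 hp1) p.2 hp2
  refine hstep.trans ?_
  have hdisj : (↑(Finset.range N ×ˢ Ωh) : Set (ℕ × Grid)).Pairwise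
      (Function.onFun Disjoint fun p : ℕ × Grid => Q p.1 p.2) := by
    intro p hp q hq hpq
    simp only [Function.onFun]
    rcases eq_or_ne p.1 q.1 with h1 | h1
    · have h2 : p.2 ≠ q.2 := fun h2 => hpq (Prod.ext h1 h2)
      exact Set.disjoint_prod.2 (Or.inr (cube_disjoint h hh h2))
    · refine Set.disjoint_prod.2 (Or.inl ?_)
      rw [Set.Ico_disjoint_Ico]
      rcases lt_or_gt_of_ne h1 with hlt | hlt
      · have : τ * ((p.1 : ℝ) + 1) ≤ τ * (q.1 : ℝ) := by
          have : ((p.1 : ℝ) + 1) ≤ (q.1 : ℝ) := by exact_mod_cast Nat.succ_le_of_lt hlt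
          nlinarith
        calc min (τ * ((p.1:ℝ) + 1)) (τ * ((q.1:ℝ) + 1)) ≤ τ * ((p.1:ℝ) + 1) := min_le_left _ _
          _ ≤ τ * (q.1:ℝ) := this
          _ ≤ max (τ * (p.1:ℝ)) (τ * (q.1:ℝ)) := le_max_right _ _
      · have : τ * ((q.1 : ℝ) + 1) ≤ τ * (p.1 : ℝ) := by
          have : ((q.1 : ℝ) + 1) ≤ (p.1 : ℝ) := by exact_mod_cast Nat.succ_le_of_lt hlt
          nlinarith
        calc min (τ * ((p.1:ℝ) + 1)) (τ * ((q.1:ℝ) + 1)) ≤ τ * ((q.1:ℝ) + 1) := min_le_right _ _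
          _ ≤ τ * (p.1:ℝ) := this
          _ ≤ max (τ * (p.1:ℝ)) (τ * (q.1:ℝ)) := le_max_left _ _
  have hunion : ∑ p ∈ Finset.range N ×ˢ Ωh, ∫ q in Q p.1 p.2, F q
      = ∫ q in ⋃ p ∈ Finset.range N ×ˢ Ωh, Q p.1 p.2, F q := by
    refine (integral_biUnion_finset (Finset.range N ×ˢ Ωh)
      (fun p _ => hQmeas p.1 p.2) hdisj (fun p hp => ?_)).symm
    obtain ⟨hp1, hp2⟩ := Finset.mem_product.1 hp
    exact hQF p.1 (Finset.mem_range.1 hp1) p.2 hp2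
  rw [hunion]
  have hmono : ∫ q in ⋃ p ∈ Finset.range N ×ˢ Ωh, Q p.1 p.2, F q
      ≤ ∫ q in Set.Icc (0:ℝ) T ×ˢ Ω, F q := by
    refine setIntegral_mono_set hfL2 (ae_of_all _ hFnn) (HasSubset.Subset.eventuallyLE ?_)
    refine Set.iUnion₂_subset fun p hp => ?_
    obtain ⟨hp1, hp2⟩ := Finset.mem_product.1 hp
    exact hQsub p.1 (Finset.mem_range.1 hp1) p.2 hp2
  refine hmono.trans ?_
  have : ∫ q in Set.Icc (0:ℝ) T ×ˢ Ω, F q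
      = ∫ t in Set.Icc (0:ℝ) T, ∫ y in Ω, ∑ i, (f t y i) ^ 2 := by
    rw [Measure.volume_eq_prod]
    exact setIntegral_prod F (by rwa [← Measure.volume_eq_prod])
  rw [this]

/-- Theorem 4.1, estimate (4.2): stability of the full
scheme, uniformly in `h` and `τ`: `‖u^{n+1}‖_{Ω_h} ≤ ‖v⁰‖_{L²} + √T ‖f‖_{L²L²}`. -/
theorem scheme_stability
    (h τ T : ℝ) (hh : 0 < h) (hτ : 0 < τ) (hT : 0 < T)
    (Tτ : ℕ) (hTτ : τ * Tτ ≤ T ∧ T < τ * Tτ + τ)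
    (Ω : Set (Fin 3 → ℝ)) (Ωh : Finset (Fin 3 → ℤ))
    (hcube : ∀ x ∈ Ωh, Cube h x ⊆ Ω)
    (v0 : (Fin 3 → ℝ) → Fin 3 → ℝ) (f : ℝ → (Fin 3 → ℝ) → Fin 3 → ℝ)
    (hv0m : ∀ i, Measurable fun y => v0 y i)
    (hv0L2 : IntegrableOn (fun y => ∑ i, (v0 y i) ^ 2) Ω)
    (hfm : ∀ i, Measurable fun p : ℝ × (Fin 3 → ℝ) => f p.1 p.2 i)
    (hfL2 : IntegrableOn (fun p : ℝ × (Fin 3 → ℝ) => ∑ i, (f p.1 p.2 i) ^ 2)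
      (Set.Icc 0 T ×ˢ Ω))
    (ut0 : (Fin 3 → ℤ) → Fin 3 → ℝ)
    (hut0 : ∀ x i, ut0 x i =
      if x ∈ Ωh \ gBdry Ωh then (h ^ 3)⁻¹ * ∫ y in Cube h x, v0 y i else 0)
    (fd : ℕ → (Fin 3 → ℤ) → Fin 3 → ℝ)
    (hfd : ∀ (n : ℕ) x i, fd n x i =
      if x ∈ Ωh then
        (τ * h ^ 3)⁻¹ *
          ∫ t in Set.Ico (τ * (n : ℝ)) (τ * ((n : ℝ) + 1)), ∫ y in Cube h x, f t y i
      else 0)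
    (u v : ℕ → (Fin 3 → ℤ) → Fin 3 → ℝ)
    (hu0 : ∀ n, ∀ x, x ∉ Ωh → u n x = 0) (hub : ∀ n, ∀ x ∈ gBdry Ωh, u n x = 0)
    (hdivu : ∀ n, ∀ x ∈ Ωh \ gBdry Ωh, ddiv h (u n) x = 0)
    (hproj0 : ∃ φ : (Fin 3 → ℤ) → ℝ, (∀ x, x ∉ Ωh → φ x = 0) ∧
      (∀ x ∈ gBdry Ωh, φ x = 0) ∧
      ∀ x ∈ Ωh \ gBdry Ωh, u 0 x + dgrad h φ x = ut0 x)
    (hv0' : ∀ n, ∀ x, x ∉ Ωh → v n x = 0) (hvb : ∀ n, ∀ x ∈ gBdry Ωh, v n x = 0)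
    (hscheme : ∀ n, ∀ x ∈ Ωh \ gBdry Ωh, ∀ i : Fin 3,
      (v n x i - u n x i) / τ =
        -(∑ j, (u n (x - gE j) j * Dp h j (fun y => v n y i) (x - gE j)
            + u n x j * Dp h j (fun y => v n y i) x) / 2)
        + (∑ j, Dtwo h j (fun y => v n y i) x) + fd n x i)
    (hproj : ∀ n, ∃ φ : (Fin 3 → ℤ) → ℝ, (∀ x, x ∉ Ωh → φ x = 0) ∧
      (∀ x ∈ gBdry Ωh, φ x = 0) ∧
      ∀ x ∈ Ωh \ gBdry Ωh, u (n + 1) x + dgrad h φ x = v n x) :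
    ∀ n < Tτ,
      Real.sqrt (∑ x ∈ Ωh, (∑ i, (u (n + 1) x i) ^ 2) * h ^ 3) ≤
        Real.sqrt (∫ y in Ω, ∑ i, (v0 y i) ^ 2) +
          Real.sqrt T * Real.sqrt (∫ t in Set.Icc (0 : ℝ) T, ∫ y in Ω, ∑ i, (f t y i) ^ 2) := by
  classical
  intro n hn
  have hh' : h ≠ 0 := ne_of_gt hh
  have hτ' : τ ≠ 0 := ne_of_gt hτ
  set I : Finset Grid := Ωh \ gBdry Ωh with hIdef
  have hIsub : I ⊆ Ωh := Finset.sdiff_subset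
  have hIB : I ⊆ gnbr (gnbr Ωh) := fun x hx => intB hx
  have memI : ∀ x, x ∈ Ωh → x ∉ gBdry Ωh → x ∈ I := fun x h1 h2 => Finset.mem_sdiff.2 ⟨h1, h2⟩
  have usupp : ∀ m, ∀ x, x ∉ I → u m x = 0 := by
    intro m x hx
    by_cases hxΩ : x ∈ Ωh
    · have : x ∈ gBdry Ωh := by by_contra hc; exact hx (memI x hxΩ hc)
      exact hub m x this
    · exact hu0 m x hxΩ
  have vsupp : ∀ m, ∀ x, x ∉ I → v m x = 0 := by
    intro m x hx
    by_cases hxΩ : x ∈ Ωh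
    · have : x ∈ gBdry Ωh := by by_contra hc; exact hx (memI x hxΩ hc)
      exact hvb m x this
    · exact hv0' m x hxΩ
  have sqnn : ∀ (w : Grid → Fin 3 → ℝ) (s : Finset Grid), (0:ℝ) ≤ ∑ x ∈ s, ∑ i, (w x i) ^ 2 :=
    fun w s => Finset.sum_nonneg fun x _ => Finset.sum_nonneg fun i _ => sq_nonneg _
  have sqrt_subset : ∀ (w : Grid → Fin 3 → ℝ),
      Real.sqrt (∑ x ∈ I, ∑ i, (w x i) ^ 2) ≤ Real.sqrt (∑ x ∈ Ωh, ∑ i, (w x i) ^ 2) :=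
    fun w => Real.sqrt_le_sqrt (Finset.sum_le_sum_of_subset_of_nonneg hIsub
      fun x _ _ => Finset.sum_nonneg fun i _ => sq_nonneg _)
  -- one-step energy estimate
  have step : ∀ m, Real.sqrt (∑ x ∈ Ωh, ∑ i, (v m x i) ^ 2)
      ≤ Real.sqrt (∑ x ∈ Ωh, ∑ i, (u m x i) ^ 2)
        + τ * Real.sqrt (∑ x ∈ Ωh, ∑ i, (fd m x i) ^ 2) := by
    intro m
    have e0 : ∑ x ∈ Ωh, ∑ i, (v m x i) ^ 2 = ∑ x ∈ I, ∑ i, (v m x i) ^ 2 :=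
      (Finset.sum_subset hIsub fun x _ hxn => by simp [vsupp m x hxn]).symm
    have split : ∑ x ∈ I, ∑ i, (v m x i) ^ 2
        = ∑ x ∈ I, ∑ i, v m x i * u m x i
          - τ * ∑ x ∈ I, ∑ i, v m x i *
              (∑ j, (u m (x - gE j) j * Dp h j (fun y => v m y i) (x - gE j)
                + u m x j * Dp h j (fun y => v m y i) x) / 2)
          + τ * ∑ x ∈ I, ∑ i, v m x i * (∑ j, Dtwo h j (fun y => v m y i) x)
          + τ * ∑ x ∈ I, ∑ i, v m x i * fd m x i := by
      have e : ∀ x ∈ I, ∀ i : Fin 3, (v m x i) ^ 2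
          = v m x i * u m x i
            - τ * (v m x i *
              (∑ j, (u m (x - gE j) j * Dp h j (fun y => v m y i) (x - gE j)
                + u m x j * Dp h j (fun y => v m y i) x) / 2))
            + τ * (v m x i * (∑ j, Dtwo h j (fun y => v m y i) x))
            + τ * (v m x i * fd m x i) := by
        intro x hx i
        have hv := hscheme m x hx i
        rw [div_eq_iff hτ'] at hv
        linear_combination (v m x i) * hv
      calc ∑ x ∈ I, ∑ i, (v m x i) ^ 2
          = ∑ x ∈ I, ∑ i, (v m x i * u m x i
            - τ * (v m x i *
              (∑ j, (u m (x - gE j) j * Dp h j (fun y => v m y i) (x - gE j)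
                + u m x j * Dp h j (fun y => v m y i) x) / 2))
            + τ * (v m x i * (∑ j, Dtwo h j (fun y => v m y i) x))
            + τ * (v m x i * fd m x i)) :=
            Finset.sum_congr rfl fun x hx => Finset.sum_congr rfl fun i _ => e x hx i
        _ = _ := by
            simp only [Finset.sum_add_distrib, Finset.sum_sub_distrib, ← Finset.mul_sum]
    have hC : ∑ x ∈ I, ∑ i, v m x i *
        (∑ j, (u m (x - gE j) j * Dp h j (fun y => v m y i) (x - gE j)
          + u m x j * Dp h j (fun y => v m y i) x) / 2) = 0 := by
      rw [Finset.sum_subset hIB fun x _ hxn => by simp [vsupp m x hxn]]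
      exact conv_zero h hh' Ωh (u m) (v m) (hdivu m) (vsupp m)
    have hD : ∑ x ∈ I, ∑ i, v m x i * (∑ j, Dtwo h j (fun y => v m y i) x) ≤ 0 := by
      rw [Finset.sum_subset hIB fun x _ hxn => by simp [vsupp m x hxn]]
      exact diff_nonpos h Ωh (v m) (vsupp m)
    have hUV : ∑ x ∈ I, ∑ i, v m x i * u m x i
        ≤ Real.sqrt (∑ x ∈ I, ∑ i, (v m x i) ^ 2)
          * Real.sqrt (∑ x ∈ Ωh, ∑ i, (u m x i) ^ 2) :=
      (cs2 I (v m) (u m)).trans (mul_le_mul_of_nonneg_left (sqrt_subset (u m))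
        (Real.sqrt_nonneg _))
    have hVF : ∑ x ∈ I, ∑ i, v m x i * fd m x i
        ≤ Real.sqrt (∑ x ∈ I, ∑ i, (v m x i) ^ 2)
          * Real.sqrt (∑ x ∈ Ωh, ∑ i, (fd m x i) ^ 2) :=
      (cs2 I (v m) (fd m)).trans (mul_le_mul_of_nonneg_left (sqrt_subset (fd m))
        (Real.sqrt_nonneg _))
    set s := Real.sqrt (∑ x ∈ I, ∑ i, (v m x i) ^ 2) with hs
    have hss : s * s = ∑ x ∈ I, ∑ i, (v m x i) ^ 2 := Real.mul_self_sqrt (sqnn (v m) I)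
    set M := Real.sqrt (∑ x ∈ Ωh, ∑ i, (u m x i) ^ 2)
      + τ * Real.sqrt (∑ x ∈ Ωh, ∑ i, (fd m x i) ^ 2) with hM
    have hMnn : 0 ≤ M := by
      have := Real.sqrt_nonneg (∑ x ∈ Ωh, ∑ i, (u m x i) ^ 2)
      have := Real.sqrt_nonneg (∑ x ∈ Ωh, ∑ i, (fd m x i) ^ 2)
      positivity
    have hkey : s * s ≤ s * M := by
      rw [hss]
      rw [split, hC, mul_zero]
      have h1 : τ * (∑ x ∈ I, ∑ i, v m x i * (∑ j, Dtwo h j (fun y => v m y i) x)) ≤ 0 :=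
        mul_nonpos_of_nonneg_of_nonpos hτ.le hD
      have h2 : τ * ∑ x ∈ I, ∑ i, v m x i * fd m x i
          ≤ τ * (s * Real.sqrt (∑ x ∈ Ωh, ∑ i, (fd m x i) ^ 2)) :=
        mul_le_mul_of_nonneg_left hVF hτ.le
      have h3 : s * M = s * Real.sqrt (∑ x ∈ Ωh, ∑ i, (u m x i) ^ 2)
          + τ * (s * Real.sqrt (∑ x ∈ Ωh, ∑ i, (fd m x i) ^ 2)) := by rw [hM]; ring
      rw [h3]
      linarith [hUV, h1, h2]
    have hgoal : s ≤ M := by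
      rcases eq_or_lt_of_le (Real.sqrt_nonneg (∑ x ∈ I, ∑ i, (v m x i) ^ 2)) with h0 | h0
      · rw [hs, ← h0]; exact hMnn
      · exact le_of_mul_le_mul_left hkey h0
    rw [e0]
    exact hgoal
  -- projection steps
  have proj_step : ∀ m, Real.sqrt (∑ x ∈ Ωh, ∑ i, (u (m + 1) x i) ^ 2)
      ≤ Real.sqrt (∑ x ∈ Ωh, ∑ i, (v m x i) ^ 2) := by
    intro m
    obtain ⟨φ, hφ1, hφ2, hφ3⟩ := hproj m
    have hφsupp : ∀ x, x ∉ I → φ x = 0 := by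
      intro x hx
      by_cases hxΩ : x ∈ Ωh
      · have : x ∈ gBdry Ωh := by by_contra hc; exact hx (memI x hxΩ hc)
        exact hφ2 x this
      · exact hφ1 x hxΩ
    exact Real.sqrt_le_sqrt (proj_le h hh' Ωh (u (m + 1)) (v m) φ (usupp (m + 1))
      (hdivu (m + 1)) hφsupp hφ3)
  have proj0 : Real.sqrt (∑ x ∈ Ωh, ∑ i, (u 0 x i) ^ 2)
      ≤ Real.sqrt (∑ x ∈ Ωh, ∑ i, (ut0 x i) ^ 2) := by
    obtain ⟨φ, hφ1, hφ2, hφ3⟩ := hproj0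
    have hφsupp : ∀ x, x ∉ I → φ x = 0 := by
      intro x hx
      by_cases hxΩ : x ∈ Ωh
      · have : x ∈ gBdry Ωh := by by_contra hc; exact hx (memI x hxΩ hc)
        exact hφ2 x this
      · exact hφ1 x hxΩ
    exact Real.sqrt_le_sqrt (proj_le h hh' Ωh (u 0) ut0 φ (usupp 0) (hdivu 0) hφsupp hφ3)
  -- discrete Grönwall
  have ind : ∀ m, Real.sqrt (∑ x ∈ Ωh, ∑ i, (u m x i) ^ 2)
      ≤ Real.sqrt (∑ x ∈ Ωh, ∑ i, (ut0 x i) ^ 2)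
        + ∑ k ∈ Finset.range m, τ * Real.sqrt (∑ x ∈ Ωh, ∑ i, (fd k x i) ^ 2) := by
    intro m
    induction m with
    | zero => simpa using proj0
    | succ k ih =>
        have h1 := (proj_step k).trans (step k)
        rw [Finset.sum_range_succ]
        calc Real.sqrt (∑ x ∈ Ωh, ∑ i, (u (k + 1) x i) ^ 2)
            ≤ Real.sqrt (∑ x ∈ Ωh, ∑ i, (u k x i) ^ 2)
              + τ * Real.sqrt (∑ x ∈ Ωh, ∑ i, (fd k x i) ^ 2) := h1
          _ ≤ _ := by linarith [ih]
  -- assemble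
  have h3nn : (0:ℝ) ≤ h ^ 3 := by positivity
  have sqrth3 : Real.sqrt (h ^ 3) * Real.sqrt (h ^ 3) = h ^ 3 := Real.mul_self_sqrt h3nn
  have lhs_eq : Real.sqrt (∑ x ∈ Ωh, (∑ i, (u (n + 1) x i) ^ 2) * h ^ 3)
      = Real.sqrt (∑ x ∈ Ωh, ∑ i, (u (n + 1) x i) ^ 2) * Real.sqrt (h ^ 3) := by
    rw [← Finset.sum_mul, Real.sqrt_mul (sqnn (u (n + 1)) Ωh)]
  rw [lhs_eq]
  have main : Real.sqrt (∑ x ∈ Ωh, ∑ i, (u (n + 1) x i) ^ 2) * Real.sqrt (h ^ 3)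
      ≤ Real.sqrt (∑ x ∈ Ωh, ∑ i, (ut0 x i) ^ 2) * Real.sqrt (h ^ 3)
        + ∑ k ∈ Finset.range (n + 1),
            τ * (Real.sqrt (∑ x ∈ Ωh, ∑ i, (fd k x i) ^ 2) * Real.sqrt (h ^ 3)) := by
    have := mul_le_mul_of_nonneg_right (ind (n + 1)) (Real.sqrt_nonneg (h ^ 3))
    calc Real.sqrt (∑ x ∈ Ωh, ∑ i, (u (n + 1) x i) ^ 2) * Real.sqrt (h ^ 3)
        ≤ (Real.sqrt (∑ x ∈ Ωh, ∑ i, (ut0 x i) ^ 2)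
            + ∑ k ∈ Finset.range (n + 1),
                τ * Real.sqrt (∑ x ∈ Ωh, ∑ i, (fd k x i) ^ 2)) * Real.sqrt (h ^ 3) := this
      _ = _ := by
            rw [add_mul, Finset.sum_mul]
            congr 1
            refine Finset.sum_congr rfl fun k _ => ?_
            ring
  refine main.trans (add_le_add ?_ ?_)
  · -- initial datum
    have hA := avg_bound h hh Ω Ωh hcube v0 hv0m hv0L2 ut0 hut0
    calc Real.sqrt (∑ x ∈ Ωh, ∑ i, (ut0 x i) ^ 2) * Real.sqrt (h ^ 3)
        = Real.sqrt ((∑ x ∈ Ωh, ∑ i, (ut0 x i) ^ 2) * h ^ 3) :=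
          (Real.sqrt_mul (sqnn ut0 Ωh) _).symm
      _ ≤ Real.sqrt (∫ y in Ω, ∑ i, (v0 y i) ^ 2) := Real.sqrt_le_sqrt hA
  · -- forcing
    have hB := force_bound h τ T hh hτ Tτ hTτ.1 Ω Ωh hcube f hfm hfL2 fd hfd (n + 1) hn
    set c : ℕ → ℝ := fun k =>
      Real.sqrt ((∑ x ∈ Ωh, ∑ i, (fd k x i) ^ 2) * h ^ 3) with hc
    have hcnn : ∀ k, 0 ≤ c k := fun k => Real.sqrt_nonneg _
    have hceq : ∀ k, Real.sqrt (∑ x ∈ Ωh, ∑ i, (fd k x i) ^ 2) * Real.sqrt (h ^ 3) = c k :=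
      fun k => (Real.sqrt_mul (sqnn (fd k) Ωh) _).symm
    have hsq : ∀ k, (Real.sqrt τ * c k) ^ 2 = τ * ((∑ x ∈ Ωh, ∑ i, (fd k x i) ^ 2) * h ^ 3) := by
      intro k
      rw [mul_pow, Real.sq_sqrt hτ.le, hc, Real.sq_sqrt (by positivity)]
    have hcs := Finset.sum_mul_sq_le_sq_mul_sq (Finset.range (n + 1))
      (fun _ => Real.sqrt τ) (fun k => Real.sqrt τ * c k)
    have hlhs : ∑ k ∈ Finset.range (n + 1), Real.sqrt τ * (Real.sqrt τ * c k)
        = ∑ k ∈ Finset.range (n + 1), τ * c k := by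
      refine Finset.sum_congr rfl fun k _ => ?_
      rw [← mul_assoc, Real.mul_self_sqrt hτ.le]
    have hsq1 : ∑ k ∈ Finset.range (n + 1), (Real.sqrt τ) ^ 2 = (n + 1 : ℝ) * τ := by
      rw [Finset.sum_const, Finset.card_range, Real.sq_sqrt hτ.le, nsmul_eq_mul]
      push_cast; ring
    have hsq2 : ∑ k ∈ Finset.range (n + 1), (Real.sqrt τ * c k) ^ 2
        = ∑ k ∈ Finset.range (n + 1), τ * ((∑ x ∈ Ωh, ∑ i, (fd k x i) ^ 2) * h ^ 3) :=
      Finset.sum_congr rfl fun k _ => hsq k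
    rw [hlhs, hsq1, hsq2] at hcs
    have hNT : (n + 1 : ℝ) * τ ≤ T := by
      have : ((n : ℝ) + 1) ≤ (Tτ : ℝ) := by exact_mod_cast Nat.succ_le_of_lt hn
      have h1 : (n + 1 : ℝ) * τ ≤ τ * Tτ := by push_cast; nlinarith
      exact h1.trans hTτ.1
    have hRnn : 0 ≤ ∑ k ∈ Finset.range (n + 1), τ * ((∑ x ∈ Ωh, ∑ i, (fd k x i) ^ 2) * h ^ 3) :=
      Finset.sum_nonneg fun k _ => mul_nonneg hτ.le (mul_nonneg (sqnn (fd k) Ωh) h3nn)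
    have hfinal : (∑ k ∈ Finset.range (n + 1), τ * c k) ^ 2
        ≤ T * ∫ t in Set.Icc (0:ℝ) T, ∫ y in Ω, ∑ i, (f t y i) ^ 2 := by
      refine hcs.trans ?_
      exact mul_le_mul hNT hB hRnn hT.le
    have hsum_nn : 0 ≤ ∑ k ∈ Finset.range (n + 1), τ * c k :=
      Finset.sum_nonneg fun k _ => mul_nonneg hτ.le (hcnn k)
    calc ∑ k ∈ Finset.range (n + 1),
          τ * (Real.sqrt (∑ x ∈ Ωh, ∑ i, (fd k x i) ^ 2) * Real.sqrt (h ^ 3))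
        = ∑ k ∈ Finset.range (n + 1), τ * c k :=
          Finset.sum_congr rfl fun k _ => by rw [hceq k]
      _ = Real.sqrt ((∑ k ∈ Finset.range (n + 1), τ * c k) ^ 2) :=
          (Real.sqrt_sq hsum_nn).symm
      _ ≤ Real.sqrt (T * ∫ t in Set.Icc (0:ℝ) T, ∫ y in Ω, ∑ i, (f t y i) ^ 2) :=
          Real.sqrt_le_sqrt hfinal
      _ = Real.sqrt T * Real.sqrt (∫ t in Set.Icc (0:ℝ) T, ∫ y in Ω, ∑ i, (f t y i) ^ 2) :=
          Real.sqrt_mul hT.le _
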